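/- If X is an infinite dimensional Banach space over ℝ and H is a Hamel basis (algebraic basis) of X, then there exists a positive integer n such that the set H_n of all linear combinations of exactly n distinct elements of H with nonzero coefficients is not a Borel subset of X. -/

import Mathlib

open Set Topology Filter

/-- The set of linear combinations of exactly `n` distinct elements of `H`
with nonzero coefficients. -/
def lincombs {X : Type*} [AddCommGroup X] [Module ℝ X] (H : Set X) (n : ℕ) : Set X :=
  {v | ∃ (s : Finset X) (c : X → ℝ), ↑s ⊆ H ∧ s.card = n ∧
    (∀ x ∈ s, c x ≠ 0) ∧ v = ∑ x ∈ s, c x • x}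

section Aux

variable {X : Type*} [AddCommGroup X] [Module ℝ X] {H : Set X}

lemma finsupp_mem_lincombs (l : X →₀ ℝ) (hl : ↑l.support ⊆ H) :
    (l.sum fun x r => r • x) ∈ lincombs H l.support.card := by
  refine ⟨l.support, l, hl, rfl, fun x hx => Finsupp.mem_support_iff.mp hx, ?_⟩
  rw [Finsupp.sum]

lemma lincombs_repr {n : ℕ} {v : X} (hv : v ∈ lincombs H n) :
    ∃ l : X →₀ ℝ, ↑l.support ⊆ H ∧ l.support.card = n ∧ (l.sum fun x r => r • x) = v := by
  classical
  obtain ⟨s, c, hsH, hcard, hc, rfl⟩ := hv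
  set l : X →₀ ℝ := Finsupp.onFinset s (fun x => if x ∈ s then c x else 0) (fun x hx => by
    by_contra h; simp [h] at hx) with hldef
  have hlapp : ∀ x ∈ s, l x = c x := fun x hx => by simp [hldef, hx]
  have hsupp : l.support = s := by
    ext x
    simp only [Finsupp.mem_support_iff, hldef, Finsupp.onFinset_apply]
    constructor
    · intro h; by_contra hxs; simp [hxs] at h
    · intro h; simpa [h] using hc x h
  refine ⟨l, by rw [hsupp]; exact hsH, by rw [hsupp, hcard], ?_⟩
  rw [Finsupp.sum, hsupp]
  exact Finset.sum_congr rfl fun x hx => by rw [hlapp x hx]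

/-- Uniqueness of the number of basis elements used. -/
lemma lincombs_card_unique (hli : LinearIndependent ℝ ((↑) : H → X))
    {n m : ℕ} {v : X} (hn : v ∈ lincombs H n) (hm : v ∈ lincombs H m) : n = m := by
  classical
  obtain ⟨l₁, hl₁H, hl₁c, hl₁v⟩ := lincombs_repr hn
  obtain ⟨l₂, hl₂H, hl₂c, hl₂v⟩ := lincombs_repr hm
  have huniq := (linearIndepOn_iff (v := id)).mp hli (l₁ - l₂) ?_ ?_
  · have : l₁ = l₂ := by rwa [sub_eq_zero] at huniq
    rw [← hl₁c, ← hl₂c, this]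
  · rw [Finsupp.mem_supported]
    intro x hx
    have hx' := Finsupp.support_sub (f := l₁) (g := l₂) hx
    rcases Finset.mem_union.mp hx' with h | h
    exacts [hl₁H h, hl₂H h]
  · have h1 : Finsupp.linearCombination ℝ id l₁ = v := by
      rw [Finsupp.linearCombination_apply]; exact hl₁v
    have h2 : Finsupp.linearCombination ℝ id l₂ = v := by
      rw [Finsupp.linearCombination_apply]; exact hl₂v
    rw [map_sub, h1, h2, sub_self]

lemma mem_lincombs_of_span (hsp : Submodule.span ℝ H = ⊤) (v : X) :
    ∃ n : ℕ, v ∈ lincombs H n := by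
  have hv : v ∈ Submodule.span ℝ H := hsp ▸ Submodule.mem_top
  obtain ⟨c, hcH, hcv⟩ := Submodule.mem_span_set.mp hv
  exact ⟨c.support.card, hcv ▸ finsupp_mem_lincombs c hcH⟩

/-- The difference of two elements of `lincombs H n` lies in some `lincombs H k`, `k ≤ 2n`. -/
lemma sub_mem_lincombs (_hli : LinearIndependent ℝ ((↑) : H → X)) {n : ℕ} {a b : X}
    (ha : a ∈ lincombs H n) (hb : b ∈ lincombs H n) :
    ∃ k ≤ 2 * n, a - b ∈ lincombs H k := by
  classical
  obtain ⟨l₁, hl₁H, hl₁c, hl₁v⟩ := lincombs_repr ha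
  obtain ⟨l₂, hl₂H, hl₂c, hl₂v⟩ := lincombs_repr hb
  have hsub : ((l₁ - l₂).sum fun x r => r • x) = a - b := by
    have : Finsupp.linearCombination ℝ id (l₁ - l₂) = a - b := by
      rw [map_sub]
      simp only [Finsupp.linearCombination_apply, id_eq]
      rw [hl₁v, hl₂v]
    rw [Finsupp.linearCombination_apply] at this
    exact this
  refine ⟨(l₁ - l₂).support.card, ?_, hsub ▸ finsupp_mem_lincombs _ ?_⟩
  · calc (l₁ - l₂).support.card ≤ (l₁.support ∪ l₂.support).card :=
          Finset.card_le_card Finsupp.support_sub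
      _ ≤ l₁.support.card + l₂.support.card := Finset.card_union_le _ _
      _ = 2 * n := by rw [hl₁c, hl₂c]; ring
  · intro x hx
    rcases Finset.mem_union.mp (Finsupp.support_sub hx) with h | h
    exacts [hl₁H h, hl₂H h]

end Aux

lemma not_isMeagre_of_isOpen' {Y : Type*} [TopologicalSpace Y] [BaireSpace Y] {U : Set Y}
    (hU : IsOpen U) (hne : U.Nonempty) : ¬ IsMeagre U := by
  intro h
  have hd : Dense Uᶜ := dense_of_mem_residual h
  obtain ⟨x, hxU, hxc⟩ := hd.inter_open_nonempty U hU hne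
  exact hxc hxU

theorem hamel_basis_not_linearly_borel
    (X : Type*) [NormedAddCommGroup X] [NormedSpace ℝ X] [CompleteSpace X]
    [MeasurableSpace X] [BorelSpace X]
    (hinf : ¬ FiniteDimensional ℝ X)
    (H : Set X) (hli : LinearIndependent ℝ ((↑) : H → X))
    (hsp : Submodule.span ℝ H = ⊤) :
    ∃ n : ℕ, 0 < n ∧ ¬ MeasurableSet (lincombs H n) := by
  by_contra hcon
  push_neg at hcon
  have hnt : Nontrivial X := by
    by_contra h
    rw [not_nontrivial_iff_subsingleton] at h
    exact hinf inferInstance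
  have hHinf : H.Infinite := by
    by_contra hfin
    rw [Set.not_infinite] at hfin
    have := FiniteDimensional.span_of_finite ℝ hfin
    rw [hsp] at this
    exact hinf (Submodule.topEquiv.finiteDimensional)
  -- `{0}` is meager
  haveI : Filter.NeBot (𝓝[≠] (0 : X)) := Module.punctured_nhds_neBot ℝ X 0
  have hmeag0 : IsMeagre ({0} : Set X) := by
    rw [IsMeagre]
    exact residual_of_dense_open isClosed_singleton.isOpen_compl (dense_compl_singleton 0)
  -- some `lincombs H n` is nonmeager
  have hcover : (Set.univ : Set X) = ⋃ k, lincombs H k := by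
    ext v
    simp only [Set.mem_univ, Set.mem_iUnion, true_iff]
    exact mem_lincombs_of_span hsp v
  have hex : ∃ k, ¬ IsMeagre (lincombs H k) := by
    by_contra hall
    push_neg at hall
    have hmu : IsMeagre (Set.univ : Set X) := by
      rw [hcover]; exact isMeagre_iUnion hall
    have hd : Dense ((Set.univ : Set X)ᶜ) := dense_of_mem_residual hmu
    rw [Set.compl_univ] at hd
    exact absurd hd.nonempty (by simp)
  obtain ⟨n, hnm⟩ := hex
  have hlc0 : lincombs H 0 = {(0 : X)} := by
    ext v
    constructor
    · rintro ⟨s, c, -, hcard, -, rfl⟩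
      simp [Finset.card_eq_zero.mp hcard]
    · rintro rfl
      exact ⟨∅, fun _ => 0, by simp, by simp, by simp, by simp⟩
  have hn0 : 0 < n := by
    rcases Nat.eq_zero_or_pos n with rfl | h
    · exact absurd (hlc0 ▸ hmeag0) hnm
    · exact h
  set S := lincombs H n with hSdef
  have hSmeas : MeasurableSet S := hcon n hn0
  obtain ⟨U, hUopen, hSU⟩ := hSmeas.residualEq_isOpen
  set M := {x : X | ¬ (x ∈ S ↔ x ∈ U)} with hMdef
  have hM : IsMeagre M := by
    have hR : {x : X | x ∈ S ↔ x ∈ U} ∈ residual X := Filter.eventuallyEq_set.mp hSU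
    have hc : Mᶜ = {x : X | x ∈ S ↔ x ∈ U} := by ext x; simp [hMdef]
    rw [IsMeagre, hc]
    exact hR
  have hUne : U.Nonempty := by
    by_contra h
    rw [Set.not_nonempty_iff_eq_empty] at h
    refine hnm (hM.mono fun x hx => ?_)
    simp only [hMdef, Set.mem_setOf_eq, h]
    intro heq
    exact (heq.mp hx).elim
  obtain ⟨u₀, hu₀⟩ := hUne
  -- a vector using `2n+1` basis elements
  obtain ⟨t, htH, htcard⟩ := hHinf.exists_subset_card_eq (2 * n + 1)
  set w : X := ∑ x ∈ t, x with hwdef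
  have hw : ∀ ε : ℝ, ε ≠ 0 → ε • w ∈ lincombs H (2 * n + 1) := fun ε hε =>
    ⟨t, fun _ => ε, htH, htcard, fun x _ => hε, by rw [hwdef, Finset.smul_sum]⟩
  -- find `ε ≠ 0` with `u₀ + ε • w ∈ U`
  have hcont : Filter.Tendsto (fun r : ℝ => u₀ + r • w) (𝓝 0) (𝓝 u₀) := by
    have hc : Continuous fun r : ℝ => u₀ + r • w := by continuity
    simpa using hc.tendsto 0
  have hev : {r : ℝ | u₀ + r • w ∈ U} ∈ 𝓝 (0 : ℝ) := hcont (hUopen.mem_nhds hu₀)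
  have hev' : {r : ℝ | u₀ + r • w ∈ U} ∩ {(0 : ℝ)}ᶜ ∈ 𝓝[≠] (0 : ℝ) :=
    Filter.inter_mem (nhdsWithin_le_nhds hev) self_mem_nhdsWithin
  obtain ⟨ε, hεU, hε0⟩ := Filter.nonempty_of_mem hev'
  set v : X := ε • w with hvdef
  have hv2n1 : v ∈ lincombs H (2 * n + 1) := hw ε hε0
  -- translated meager set
  set M' := (fun x : X => x - v) ⁻¹' M with hM'def
  have hM' : IsMeagre M' :=
    hM.preimage_of_isOpenMap (Homeomorph.subRight v).continuous (Homeomorph.subRight v).isOpenMap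
  set V := U ∩ ((fun x : X => x - v) ⁻¹' U) with hVdef
  have hVopen : IsOpen V := hUopen.inter (hUopen.preimage (by continuity))
  have hVne : V.Nonempty := ⟨u₀ + v, hεU, by simp [hu₀]⟩
  have hVnm : ¬ IsMeagre V := not_isMeagre_of_isOpen' hVopen hVne
  have hMM' : IsMeagre (M ∪ M') := by
    rw [IsMeagre, Set.compl_union]
    exact Filter.inter_mem hM hM'
  have hexx : (V \ (M ∪ M')).Nonempty := by
    by_contra h
    rw [Set.not_nonempty_iff_eq_empty, Set.diff_eq_empty] at h
    exact hVnm (hMM'.mono h)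
  obtain ⟨x, hxV, hxM⟩ := hexx
  have hxS : x ∈ S := by
    have hx : x ∉ M := fun h => hxM (Or.inl h)
    simp only [hMdef, Set.mem_setOf_eq, not_not] at hx
    exact hx.mpr hxV.1
  have hxvS : x - v ∈ S := by
    have hx : x - v ∉ M := fun h => hxM (Or.inr h)
    simp only [hMdef, Set.mem_setOf_eq, not_not] at hx
    exact hx.mpr hxV.2
  obtain ⟨k, hk, hkmem⟩ := sub_mem_lincombs hli hxS hxvS
  rw [sub_sub_cancel] at hkmem
  have := lincombs_card_unique hli hv2n1 hkmem
  omega
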